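/- Let F : EuclideanSpace ℝ (Fin E) → ℝ be differentiable with L-Lipschitz gradient (L > 0), and let S : Fin n → Finset (Fin E) be a set system (each S i nonempty, every coordinate in exactly two sets) with N_max the maximum cardinality of the S i. Then for every λ, the expected progress of the set-wise uniform coordinate descent step satisfies (1/n)·Σ_{i : Fin n} (1/|S i|)·Σ_{ℓ ∈ S i} F(λ − (1/L)·(∇F(λ))_ℓ • e_ℓ) ≤ F(λ) − (1/(L·n·N_max))·‖∇F(λ)‖². -/

import Mathlib

open RealInnerProductSpace

open intervalIntegral in
lemma oneD (g : ℝ → ℝ) (K : ℝ) (hK : 0 ≤ K) (hg : Differentiable ℝ g)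
    (hlip : ∀ s t : ℝ, |deriv g t - deriv g s| ≤ K * |t - s|) :
    g 1 ≤ g 0 + deriv g 0 + K / 2 := by
  have hcont : Continuous (deriv g) := by
    refine (LipschitzWith.of_dist_le_mul (K := K.toNNReal) (fun x y => ?_)).continuous
    rw [Real.coe_toNNReal _ hK, Real.dist_eq, Real.dist_eq]
    exact hlip y x
  have hint : IntervalIntegrable (deriv g) MeasureTheory.volume 0 1 :=
    hcont.intervalIntegrable 0 1
  have ftc : ∫ t in (0:ℝ)..1, deriv g t = g 1 - g 0 :=
    integral_deriv_eq_sub (fun x _ => hg x) hint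
  have hmono : ∫ t in (0:ℝ)..1, deriv g t ≤ ∫ t in (0:ℝ)..1, (deriv g 0 + K * t) := by
    refine integral_mono_on (by norm_num) hint ?_ (fun t ht => ?_)
    · exact (continuous_const.add (continuous_const.mul continuous_id)).intervalIntegrable 0 1
    · have h := hlip 0 t
      rw [abs_le] at h
      have ht0 : 0 ≤ t := ht.1
      have : |t - 0| = t := by rw [sub_zero, abs_of_nonneg ht0]
      nlinarith [h.2]
  have hval : ∫ t in (0:ℝ)..1, (deriv g 0 + K * t) = deriv g 0 + K / 2 := by
    rw [integral_add (f := fun _ => deriv g 0) (g := fun t => K * t) (intervalIntegrable_const)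
      ((continuous_const.mul continuous_id').intervalIntegrable 0 1),
      integral_const, intervalIntegral.integral_const_mul, integral_id]
    norm_num
    ring
  linarith [hmono.trans_eq hval, ftc.symm.trans_le (hmono.trans_eq hval)]

lemma descent {E : ℕ} (F : EuclideanSpace ℝ (Fin E) → ℝ) (L : ℝ) (hL : 0 < L)
    (hdiff : Differentiable ℝ F) (hlip : LipschitzWith L.toNNReal (gradient F))
    (x v : EuclideanSpace ℝ (Fin E)) :
    F (x + v) ≤ F x + ⟪gradient F x, v⟫ + L / 2 * ‖v‖ ^ 2 := by
  set g : ℝ → ℝ := fun t => F (x + t • v) with hgdef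
  have hline : ∀ t : ℝ, HasDerivAt (fun s : ℝ => x + s • v) v t := by
    intro t
    simpa using ((hasDerivAt_id t).smul_const v).const_add x
  have hd : ∀ t : ℝ, HasDerivAt g (⟪gradient F (x + t • v), v⟫) t := by
    intro t
    have hF : HasFDerivAt F ((InnerProductSpace.toDual ℝ _) (gradient F (x + t • v)))
        (x + t • v) := hasGradientAt_iff_hasFDerivAt.mp (hdiff _).hasGradientAt
    exact hF.comp_hasDerivAt t (hline t)
  have hderiv : ∀ t : ℝ, deriv g t = ⟪gradient F (x + t • v), v⟫ := fun t => (hd t).deriv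
  have hgd : Differentiable ℝ g := fun t => (hd t).differentiableAt
  have hK : ∀ s t : ℝ, |deriv g t - deriv g s| ≤ (L * ‖v‖ ^ 2) * |t - s| := by
    intro s t
    rw [hderiv, hderiv, ← inner_sub_left]
    calc |⟪gradient F (x + t • v) - gradient F (x + s • v), v⟫|
        ≤ ‖gradient F (x + t • v) - gradient F (x + s • v)‖ * ‖v‖ := abs_real_inner_le_norm _ _
      _ ≤ (L * (|t - s| * ‖v‖)) * ‖v‖ := by
          have := hlip.dist_le_mul (x + t • v) (x + s • v)
          rw [Real.coe_toNNReal _ hL.le, dist_eq_norm] at this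
          have h2 : (x + t • v) - (x + s • v) = (t - s) • v := by
            rw [sub_smul]; abel
          rw [dist_eq_norm, h2, norm_smul, Real.norm_eq_abs] at this
          gcongr
      _ = (L * ‖v‖ ^ 2) * |t - s| := by ring
  have key := oneD g (L * ‖v‖ ^ 2) (by positivity) hgd hK
  have h0 : g 0 = F x := by simp [hgdef]
  have h1 : g 1 = F (x + v) := by simp [hgdef]
  rw [h0, h1, hderiv 0] at key
  simp only [zero_smul, add_zero] at key
  linarith

/-- Expected progress of one step of set-wise uniform coordinate descent
(SU-CD) on an `L`-smooth function. -/
theorem stmt5 (n E : ℕ) (hn : 0 < n)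
    (F : EuclideanSpace ℝ (Fin E) → ℝ) (L : ℝ) (hL : 0 < L)
    (hdiff : Differentiable ℝ F)
    (hlip : LipschitzWith L.toNNReal (gradient F))
    (S : Fin n → Finset (Fin E))
    (hne : ∀ i, (S i).Nonempty)
    (htwo : ∀ ℓ : Fin E, (Finset.univ.filter (fun i => ℓ ∈ S i)).card = 2)
    (Nmax : ℕ) (hNmax : IsGreatest (Set.range fun i => (S i).card) Nmax)
    (lam : EuclideanSpace ℝ (Fin E)) :
    (1 / (n : ℝ)) * ∑ i, (1 / ((S i).card : ℝ)) *
        ∑ ℓ ∈ S i, F (lam - ((1 / L) * gradient F lam ℓ) • EuclideanSpace.single ℓ (1 : ℝ)) ≤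
      F lam - (1 / (L * n * Nmax)) * ‖gradient F lam‖ ^ 2 := by
  set g := gradient F lam with hg
  -- coordinate descent step bound
  have hstep : ∀ ℓ : Fin E,
      F (lam - ((1 / L) * g ℓ) • EuclideanSpace.single ℓ (1 : ℝ)) ≤
        F lam - (1 / (2 * L)) * (g ℓ) ^ 2 := by
    intro ℓ
    have h := descent F L hL hdiff hlip lam (-(((1 / L) * g ℓ) • EuclideanSpace.single ℓ (1 : ℝ)))
    have hxv : lam + -(((1 / L) * g ℓ) • EuclideanSpace.single ℓ (1 : ℝ)) =
        lam - ((1 / L) * g ℓ) • EuclideanSpace.single ℓ (1 : ℝ) := by abel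
    rw [hxv] at h
    have hinner : ⟪g, -(((1 / L) * g ℓ) • EuclideanSpace.single ℓ (1 : ℝ))⟫ =
        -((1 / L) * (g ℓ) ^ 2) := by
      rw [inner_neg_right, real_inner_smul_right, EuclideanSpace.inner_single_right]
      simp only [map_one, one_mul, conj_trivial]
      ring
    have hnorm : ‖-(((1 / L) * g ℓ) • EuclideanSpace.single ℓ (1 : ℝ))‖ ^ 2 =
        (1 / L) ^ 2 * (g ℓ) ^ 2 := by
      rw [norm_neg, norm_smul, EuclideanSpace.norm_single]
      simp [mul_pow, sq_abs]
    rw [hinner, hnorm] at h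
    calc F (lam - ((1 / L) * g ℓ) • EuclideanSpace.single ℓ (1 : ℝ))
        ≤ F lam + -((1 / L) * (g ℓ) ^ 2) + L / 2 * ((1 / L) ^ 2 * (g ℓ) ^ 2) := h
      _ = F lam - (1 / (2 * L)) * (g ℓ) ^ 2 := by field_simp; ring
  -- positivity facts
  have hNpos : 0 < Nmax := by
    obtain ⟨i, hi⟩ := hNmax.1
    have h1 : (S i).card = Nmax := hi
    have := Finset.card_pos.mpr (hne i)
    omega
  have hcard : ∀ i, 0 < ((S i).card : ℝ) := fun i => by
    exact_mod_cast Finset.card_pos.mpr (hne i)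
  -- bound the LHS
  have step1 : ∀ i : Fin n, (1 / ((S i).card : ℝ)) *
      ∑ ℓ ∈ S i, F (lam - ((1 / L) * g ℓ) • EuclideanSpace.single ℓ (1 : ℝ)) ≤
      F lam - (1 / (2 * L)) * (1 / ((S i).card : ℝ)) * ∑ ℓ ∈ S i, (g ℓ) ^ 2 := by
    intro i
    have hsum : ∑ ℓ ∈ S i, F (lam - ((1 / L) * g ℓ) • EuclideanSpace.single ℓ (1 : ℝ)) ≤
        ∑ ℓ ∈ S i, (F lam - (1 / (2 * L)) * (g ℓ) ^ 2) :=
      Finset.sum_le_sum fun ℓ _ => hstep ℓ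
    have := mul_le_mul_of_nonneg_left hsum (le_of_lt (by positivity : (0:ℝ) < 1 / ((S i).card : ℝ)))
    rw [Finset.sum_sub_distrib, Finset.sum_const, ← Finset.mul_sum] at this
    calc (1 / ((S i).card : ℝ)) *
        ∑ ℓ ∈ S i, F (lam - ((1 / L) * g ℓ) • EuclideanSpace.single ℓ (1 : ℝ))
        ≤ (1 / ((S i).card : ℝ)) * ((S i).card • F lam - 1 / (2 * L) * ∑ ℓ ∈ S i, g ℓ ^ 2) := this
      _ = F lam - (1 / (2 * L)) * (1 / ((S i).card : ℝ)) * ∑ ℓ ∈ S i, (g ℓ) ^ 2 := by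
          rw [nsmul_eq_mul]
          field_simp
  -- second: weight bound using Nmax
  have step2 : ∀ i : Fin n, (1 / (Nmax : ℝ)) * ∑ ℓ ∈ S i, (g ℓ) ^ 2 ≤
      (1 / ((S i).card : ℝ)) * ∑ ℓ ∈ S i, (g ℓ) ^ 2 := by
    intro i
    have hle : ((S i).card : ℝ) ≤ (Nmax : ℝ) := by
      exact_mod_cast hNmax.2 ⟨i, rfl⟩
    have hs : 0 ≤ ∑ ℓ ∈ S i, (g ℓ) ^ 2 := Finset.sum_nonneg fun _ _ => sq_nonneg _
    gcongr
  -- double counting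
  have hdouble : ∑ i : Fin n, ∑ ℓ ∈ S i, (g ℓ) ^ 2 = 2 * ∑ ℓ : Fin E, (g ℓ) ^ 2 := by
    have : ∀ i : Fin n, ∑ ℓ ∈ S i, (g ℓ) ^ 2 =
        ∑ ℓ : Fin E, if ℓ ∈ S i then (g ℓ) ^ 2 else 0 := by
      intro i; rw [Finset.sum_ite_mem, Finset.univ_inter]
    simp_rw [this]
    rw [Finset.sum_comm]
    rw [Finset.mul_sum]
    refine Finset.sum_congr rfl fun ℓ _ => ?_
    rw [← Finset.sum_filter, Finset.sum_const, htwo ℓ, nsmul_eq_mul]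
    norm_num
  have hnormsq : ‖g‖ ^ 2 = ∑ ℓ : Fin E, (g ℓ) ^ 2 := by
    rw [EuclideanSpace.norm_eq, Real.sq_sqrt (Finset.sum_nonneg fun _ _ => sq_nonneg _)]
    simp [sq_abs]
  -- combine
  have hsum1 : ∑ i, (1 / ((S i).card : ℝ)) *
      ∑ ℓ ∈ S i, F (lam - ((1 / L) * g ℓ) • EuclideanSpace.single ℓ (1 : ℝ)) ≤
      n * F lam - (1 / (2 * L)) * (1 / (Nmax : ℝ)) * (2 * ‖g‖ ^ 2) := by
    calc ∑ i, (1 / ((S i).card : ℝ)) *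
        ∑ ℓ ∈ S i, F (lam - ((1 / L) * g ℓ) • EuclideanSpace.single ℓ (1 : ℝ))
        ≤ ∑ i : Fin n, (F lam - (1 / (2 * L)) * (1 / ((S i).card : ℝ)) * ∑ ℓ ∈ S i, (g ℓ) ^ 2) :=
          Finset.sum_le_sum fun i _ => step1 i
      _ ≤ ∑ i : Fin n, (F lam - (1 / (2 * L)) * (1 / (Nmax : ℝ)) * ∑ ℓ ∈ S i, (g ℓ) ^ 2) := by
          refine Finset.sum_le_sum fun i _ => ?_
          have h2L : (0:ℝ) < 1 / (2 * L) := by positivity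
          have := mul_le_mul_of_nonneg_left (step2 i) h2L.le
          rw [← mul_assoc, ← mul_assoc] at this
          linarith
      _ = n * F lam - (1 / (2 * L)) * (1 / (Nmax : ℝ)) * (2 * ‖g‖ ^ 2) := by
          rw [Finset.sum_sub_distrib, Finset.sum_const, ← Finset.mul_sum, hdouble, hnormsq]
          simp [nsmul_eq_mul]
  have hnpos : (0:ℝ) < n := by exact_mod_cast hn
  have hNmaxpos : (0:ℝ) < Nmax := by exact_mod_cast hNpos
  have := mul_le_mul_of_nonneg_left hsum1 (le_of_lt (by positivity : (0:ℝ) < 1 / (n:ℝ)))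
  calc (1 / (n : ℝ)) * ∑ i, (1 / ((S i).card : ℝ)) *
      ∑ ℓ ∈ S i, F (lam - ((1 / L) * g ℓ) • EuclideanSpace.single ℓ (1 : ℝ))
      ≤ (1 / (n:ℝ)) * (n * F lam - (1 / (2 * L)) * (1 / (Nmax : ℝ)) * (2 * ‖g‖ ^ 2)) := this
    _ = F lam - (1 / (L * n * Nmax)) * ‖g‖ ^ 2 := by
        field_simp
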